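/- Let S be a type and σ : S → S a map with σ ∘ σ = id that has no fixed points (σ(s) ≠ s for all s). Then every finitely supported invariant function is averaged: for every finitely supported c : S → ℤ with c(σ(s)) = c(s) for all s, there exists a finitely supported c' : S → ℤ with c = c' + c' ∘ σ. (This is why the reduced group of quaternionic cycles of odd codimension is a single point.) -/

import Mathlib

/-- If an involution `σ` of `S` has no fixed points, then every
finitely supported `σ`-invariant integer-valued function on `S` is averaged, i.e. of the
form `c' + c' ∘ σ`. -/
theorem invariant_is_averaged_of_free
    (S : Type*) (σ : S → S) (h : σ ∘ σ = id) (hfree : ∀ s, σ s ≠ s)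
    (c : S →₀ ℤ) (hc : ∀ s, c (σ s) = c s) :
    ∃ c' : S →₀ ℤ, ∀ s, c s = c' s + c' (σ s) := by
  classical
  have hσσ : ∀ s, σ (σ s) = s := fun s => congrFun h s
  refine ⟨c.filter (fun s => WellOrderingRel s (σ s)), fun s => ?_⟩
  rw [Finsupp.filter_apply, Finsupp.filter_apply, hσσ, hc]
  have htri := trichotomous_of (@WellOrderingRel S) s (σ s)
  have hasym : ∀ {a b : S}, WellOrderingRel a b → ¬ WellOrderingRel b a := fun h1 h2 => asymm h1 h2
  rcases htri with h1 | h1 | h1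
  · rw [if_pos h1, if_neg (fun h2 => hasym h1 h2)]; ring
  · exact absurd h1.symm (hfree s)
  · rw [if_neg (fun h2 => hasym h2 h1), if_pos h1]; ring
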